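/- Decompose the footprint of a centered 1 × L rectangle (L > 1) over a quarter-plane corner into the intersection of the inscribed central unit square with the quarter-plane (blue part) and the remainder (red part). Then the blue part always has area 1/4 independent of orientation, and the red part has area zero if and only if the rectangle is in the symmetric 45-degree position. -/
import Mathlib

open Real MeasureTheory

/-- The rectangle of width 1 and length `L`, centered at `c` and rotated by `θ`. -/
def rect (c : ℝ × ℝ) (θ L : ℝ) : Set (ℝ × ℝ) :=
  {p | |Real.cos θ * (p.1 - c.1) + Real.sin θ * (p.2 - c.2)| ≤ 1 / 2 ∧
       |(-Real.sin θ) * (p.1 - c.1) + Real.cos θ * (p.2 - c.2)| ≤ L / 2}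

/-- The quarter-plane modeling the table corner. -/
def Q : Set (ℝ × ℝ) := {p | p.1 ≤ 0 ∧ p.2 ≤ 0}

lemma mem_rect {θ L : ℝ} {p : ℝ × ℝ} :
    p ∈ rect (0, 0) θ L ↔
      |Real.cos θ * p.1 + Real.sin θ * p.2| ≤ 1 / 2 ∧
      |(-Real.sin θ) * p.1 + Real.cos θ * p.2| ≤ L / 2 := by
  simp [rect]

noncomputable def rotL (a b : ℝ) : (ℝ × ℝ) →ₗ[ℝ] (ℝ × ℝ) :=
  Matrix.toLin (Module.Basis.finTwoProd ℝ) (Module.Basis.finTwoProd ℝ) !![a, b; -b, a]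

lemma rotL_apply (a b : ℝ) (p : ℝ × ℝ) :
    rotL a b p = (a * p.1 + b * p.2, -b * p.1 + a * p.2) := by
  simp [rotL, Matrix.toLin_finTwoProd_apply]

lemma rotL_det (a b : ℝ) : LinearMap.det (rotL a b) = a ^ 2 + b ^ 2 := by
  rw [rotL, LinearMap.det_toLin, Matrix.det_fin_two_of]; ring

lemma vol_rot (a b : ℝ) (h : a ^ 2 + b ^ 2 = 1) (A : Set (ℝ × ℝ)) :
    volume (rotL a b ⁻¹' A) = volume A := by
  rw [Measure.addHaar_preimage_linearMap volume (by rw [rotL_det, h]; norm_num) A,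
    rotL_det, h]
  norm_num

lemma vol_rot90 (T U : Set (ℝ × ℝ)) (h : ∀ p : ℝ × ℝ, (p.2, -p.1) ∈ T ↔ p ∈ U) :
    volume T = volume U := by
  rw [← vol_rot 0 1 (by norm_num) T]
  congr 1
  ext p
  have e : rotL 0 1 p = (p.2, -p.1) := by rw [rotL_apply]; norm_num
  simp [Set.mem_preimage, e, h p]

lemma volume_rect_one (θ : ℝ) : volume (rect (0, 0) θ 1) = 1 := by
  have h : rect (0, 0) θ 1 =
      rotL (Real.cos θ) (Real.sin θ) ⁻¹'
        (Set.Icc (-(1 : ℝ) / 2) (1 / 2) ×ˢ Set.Icc (-(1 : ℝ) / 2) (1 / 2)) := by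
    ext p
    rw [mem_rect]
    simp only [Set.mem_preimage, rotL_apply, Set.mem_prod, Set.mem_Icc, abs_le]
    constructor
    · rintro ⟨⟨h1, h2⟩, h3, h4⟩
      exact ⟨⟨by linarith, by linarith⟩, ⟨by linarith, by linarith⟩⟩
    · rintro ⟨⟨h1, h2⟩, h3, h4⟩
      exact ⟨⟨by linarith, by linarith⟩, ⟨by linarith, by linarith⟩⟩
  rw [h, vol_rot _ _ (Real.cos_sq_add_sin_sq θ),
    MeasureTheory.Measure.volume_eq_prod, Measure.prod_prod, Real.volume_Icc]
  norm_num

lemma axis1_null : volume {p : ℝ × ℝ | p.1 = 0} = 0 := by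
  have h : {p : ℝ × ℝ | p.1 = 0} = ({0} : Set ℝ) ×ˢ (Set.univ : Set ℝ) := by
    ext ⟨x, y⟩; simp [Set.mem_prod, eq_comm]
  rw [h, MeasureTheory.Measure.volume_eq_prod, Measure.prod_prod]
  simp

lemma axis2_null : volume {p : ℝ × ℝ | p.2 = 0} = 0 := by
  have h : {p : ℝ × ℝ | p.2 = 0} = (Set.univ : Set ℝ) ×ˢ ({0} : Set ℝ) := by
    ext ⟨x, y⟩; simp [Set.mem_prod, eq_comm]
  rw [h, MeasureTheory.Measure.volume_eq_prod, Measure.prod_prod]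
  simp

lemma axes_null : volume ({p : ℝ × ℝ | p.1 = 0} ∪ {p : ℝ × ℝ | p.2 = 0}) = 0 :=
  measure_union_null axis1_null axis2_null

lemma rect_measurable (c : ℝ × ℝ) (θ L : ℝ) : MeasurableSet (rect c θ L) := by
  have h : rect c θ L =
      {p : ℝ × ℝ | |Real.cos θ * (p.1 - c.1) + Real.sin θ * (p.2 - c.2)| ≤ 1 / 2} ∩
      {p : ℝ × ℝ | |(-Real.sin θ) * (p.1 - c.1) + Real.cos θ * (p.2 - c.2)| ≤ L / 2} := rfl
  rw [h]
  refine MeasurableSet.inter ?_ ?_ <;>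
    exact measurableSet_le (by fun_prop) measurable_const

lemma square_quarter (θ : ℝ) : volume (rect (0, 0) θ 1 ∩ Q) = 1 / 4 := by
  set c := Real.cos θ with hc
  set s := Real.sin θ with hs
  set S := rect (0, 0) θ 1 with hSdef
  set O1 : Set (ℝ × ℝ) := {p | p.1 < 0 ∧ p.2 < 0} with hO1
  set O2 : Set (ℝ × ℝ) := {p | 0 < p.1 ∧ p.2 < 0} with hO2
  set O3 : Set (ℝ × ℝ) := {p | 0 < p.1 ∧ 0 < p.2} with hO3
  set O4 : Set (ℝ × ℝ) := {p | p.1 < 0 ∧ 0 < p.2} with hO4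
  -- rotating by 90° fixes the square
  have hrotS : ∀ p : ℝ × ℝ, (p.2, -p.1) ∈ S ↔ p ∈ S := by
    intro p
    rw [hSdef, mem_rect, mem_rect]
    have e1 : |c * (p.2, -p.1).1 + s * (p.2, -p.1).2| = |(-s) * p.1 + c * p.2| := by
      congr 1; ring
    have e2 : |(-s) * (p.2, -p.1).1 + c * (p.2, -p.1).2| = |c * p.1 + s * p.2| := by
      rw [show (-s) * (p.2, -p.1).1 + c * (p.2, -p.1).2 = -(c * p.1 + s * p.2) by ring,
        abs_neg]
    rw [← hc, ← hs, e1, e2]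
    tauto
  have e12 : volume (S ∩ O1) = volume (S ∩ O2) := by
    refine vol_rot90 _ _ ?_
    intro p
    constructor
    · rintro ⟨h1, h2, h3⟩
      exact ⟨(hrotS p).mp h1, by simpa using h3, h2⟩
    · rintro ⟨h1, h2, h3⟩
      exact ⟨(hrotS p).mpr h1, h3, by simpa using h2⟩
  have e23 : volume (S ∩ O2) = volume (S ∩ O3) := by
    refine vol_rot90 _ _ ?_
    intro p
    constructor
    · rintro ⟨h1, h2, h3⟩
      exact ⟨(hrotS p).mp h1, by simpa using h3, h2⟩
    · rintro ⟨h1, h2, h3⟩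
      exact ⟨(hrotS p).mpr h1, h3, by simpa using h2⟩
  have e34 : volume (S ∩ O3) = volume (S ∩ O4) := by
    refine vol_rot90 _ _ ?_
    intro p
    constructor
    · rintro ⟨h1, h2, h3⟩
      exact ⟨(hrotS p).mp h1, by simpa using h3, h2⟩
    · rintro ⟨h1, h2, h3⟩
      exact ⟨(hrotS p).mpr h1, h3, by simpa using h2⟩
  -- Q and O1 agree up to measure zero
  have hQO1 : volume (S ∩ Q) = volume (S ∩ O1) := by
    apply le_antisymm
    · calc volume (S ∩ Q)
          ≤ volume ((S ∩ O1) ∪ ({p : ℝ × ℝ | p.1 = 0} ∪ {p : ℝ × ℝ | p.2 = 0})) := by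
            apply measure_mono
            rintro p ⟨hpS, hx, hy⟩
            rcases eq_or_lt_of_le hx with h | h
            · exact Or.inr (Or.inl h)
            · rcases eq_or_lt_of_le hy with h' | h'
              · exact Or.inr (Or.inr h')
              · exact Or.inl ⟨hpS, h, h'⟩
        _ ≤ volume (S ∩ O1) + volume ({p : ℝ × ℝ | p.1 = 0} ∪ {p : ℝ × ℝ | p.2 = 0}) :=
            measure_union_le _ _
        _ = volume (S ∩ O1) := by rw [axes_null, add_zero]
    · exact measure_mono (Set.inter_subset_inter_right _ (fun p hp => ⟨hp.1.le, hp.2.le⟩))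
  -- the four pieces sum to the whole square
  have hm2 : MeasurableSet (S ∩ O2) :=
    (rect_measurable _ _ _).inter
      ((IsOpen.inter (isOpen_lt continuous_const continuous_fst)
        (isOpen_lt continuous_snd continuous_const)).measurableSet)
  have hm3 : MeasurableSet (S ∩ O3) :=
    (rect_measurable _ _ _).inter
      ((IsOpen.inter (isOpen_lt continuous_const continuous_fst)
        (isOpen_lt continuous_const continuous_snd)).measurableSet)
  have hm4 : MeasurableSet (S ∩ O4) :=
    (rect_measurable _ _ _).inter
      ((IsOpen.inter (isOpen_lt continuous_fst continuous_const)
        (isOpen_lt continuous_const continuous_snd)).measurableSet)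
  have hd12 : Disjoint (S ∩ O1) (S ∩ O2) := by
    rw [Set.disjoint_left]
    rintro p ⟨_, h1, _⟩ ⟨_, h2, _⟩; linarith
  have hd13 : Disjoint (S ∩ O1) (S ∩ O3) := by
    rw [Set.disjoint_left]
    rintro p ⟨_, h1, _⟩ ⟨_, h2, _⟩; linarith
  have hd23 : Disjoint (S ∩ O2) (S ∩ O3) := by
    rw [Set.disjoint_left]
    rintro p ⟨_, _, h1⟩ ⟨_, _, h2⟩; linarith
  have hd14 : Disjoint (S ∩ O1) (S ∩ O4) := by
    rw [Set.disjoint_left]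
    rintro p ⟨_, _, h1⟩ ⟨_, _, h2⟩; linarith
  have hd24 : Disjoint (S ∩ O2) (S ∩ O4) := by
    rw [Set.disjoint_left]
    rintro p ⟨_, h1, _⟩ ⟨_, h2, _⟩; linarith
  have hd34 : Disjoint (S ∩ O3) (S ∩ O4) := by
    rw [Set.disjoint_left]
    rintro p ⟨_, h1, _⟩ ⟨_, h2, _⟩; linarith
  have hsum : volume S =
      volume (S ∩ O1) + volume (S ∩ O2) + volume (S ∩ O3) + volume (S ∩ O4) := by
    have hU : volume ((S ∩ O1) ∪ (S ∩ O2) ∪ (S ∩ O3) ∪ (S ∩ O4)) = volume S := by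
      apply le_antisymm
      · apply measure_mono
        rintro p (((⟨h, _⟩ | ⟨h, _⟩) | ⟨h, _⟩) | ⟨h, _⟩) <;> exact h
      · calc volume S
            ≤ volume (((S ∩ O1) ∪ (S ∩ O2) ∪ (S ∩ O3) ∪ (S ∩ O4)) ∪
                ({p : ℝ × ℝ | p.1 = 0} ∪ {p : ℝ × ℝ | p.2 = 0})) := by
              apply measure_mono
              intro p hp
              rcases lt_trichotomy p.1 0 with h1 | h1 | h1
              · rcases lt_trichotomy p.2 0 with h2 | h2 | h2
                · exact Or.inl (Or.inl (Or.inl (Or.inl ⟨hp, h1, h2⟩)))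
                · exact Or.inr (Or.inr h2)
                · exact Or.inl (Or.inr ⟨hp, h1, h2⟩)
              · exact Or.inr (Or.inl h1)
              · rcases lt_trichotomy p.2 0 with h2 | h2 | h2
                · exact Or.inl (Or.inl (Or.inl (Or.inr ⟨hp, h1, h2⟩)))
                · exact Or.inr (Or.inr h2)
                · exact Or.inl (Or.inl (Or.inr ⟨hp, h1, h2⟩))
          _ ≤ volume ((S ∩ O1) ∪ (S ∩ O2) ∪ (S ∩ O3) ∪ (S ∩ O4)) +
              volume ({p : ℝ × ℝ | p.1 = 0} ∪ {p : ℝ × ℝ | p.2 = 0}) :=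
            measure_union_le _ _
          _ = volume ((S ∩ O1) ∪ (S ∩ O2) ∪ (S ∩ O3) ∪ (S ∩ O4)) := by
            rw [axes_null, add_zero]
    rw [← hU, measure_union ((hd14.union_left hd24).union_left hd34) hm4,
      measure_union (hd13.union_left hd23) hm3, measure_union hd12 hm2]
  have hv1 : volume S = 1 := volume_rect_one θ
  rw [hsum, ← e34, ← e23, ← e12] at hv1
  rw [hQO1]
  have h4' : (4 : ENNReal) * volume (S ∩ O1) = 1 := by
    rw [← hv1]; ring
  exact (ENNReal.eq_div_iff (by norm_num) (by norm_num)).mpr h4'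

lemma exists_b_pos {c s : ℝ} (hc : 0 < c) (hs : 0 < s) (hne : c ≠ s) :
    ∃ b : ℝ, |b| < 1 ∧ 0 < (b * c - s) * (b * s + c) := by
  rcases lt_or_gt_of_ne hne with h | h
  · -- c < s
    have hd : c / s < 1 := (div_lt_one hs).mpr h
    have hd0 : 0 < c / s := div_pos hc hs
    refine ⟨-(c / s + 1) / 2, by rw [abs_lt]; constructor <;> nlinarith, ?_⟩
    have e : (-(c / s + 1) / 2) * s + c = (c - s) / 2 := by
      field_simp; ring
    have f1 : (-(c / s + 1) / 2) * c - s < 0 := by nlinarith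
    have f2 : (-(c / s + 1) / 2) * s + c < 0 := by rw [e]; linarith
    exact mul_pos_of_neg_of_neg f1 f2
  · -- s < c
    have hd : s / c < 1 := (div_lt_one hc).mpr h
    have hd0 : 0 < s / c := div_pos hs hc
    refine ⟨(s / c + 1) / 2, by rw [abs_lt]; constructor <;> nlinarith, ?_⟩
    have e : ((s / c + 1) / 2) * c - s = (c - s) / 2 := by
      field_simp; ring
    have f1 : 0 < ((s / c + 1) / 2) * c - s := by rw [e]; linarith
    have f2 : 0 < ((s / c + 1) / 2) * s + c := by nlinarith
    exact mul_pos f1 f2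

lemma exists_b {c s : ℝ} (h1 : c ^ 2 + s ^ 2 = 1) (h2 : c ≠ s) :
    ∃ b : ℝ, |b| < 1 ∧ 0 < (b * c - s) * (b * s + c) := by
  rcases eq_or_ne c (-s) with rfl | hc
  · have hs : s ≠ 0 := by
      intro h
      exact h2 (by rw [h]; ring)
    have hs2 : 0 < s ^ 2 := lt_of_le_of_ne (sq_nonneg s) (Ne.symm (pow_ne_zero 2 hs))
    exact ⟨0, by norm_num, by nlinarith⟩
  · rcases lt_trichotomy (c * s) 0 with hcs | hcs | hcs
    · -- c * s < 0
      have hne : c - s ≠ 0 := sub_ne_zero.mpr h2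
      refine ⟨(c + s) / (c - s), ?_, ?_⟩
      · rw [abs_div, div_lt_one (abs_pos.mpr hne)]
        have h4 : (c + s) ^ 2 < (c - s) ^ 2 := by nlinarith
        nlinarith [abs_nonneg (c + s), abs_nonneg (c - s), sq_abs (c + s), sq_abs (c - s),
          abs_pos.mpr hne]
      · have e1 : (c + s) / (c - s) * c - s = 1 / (c - s) := by
          field_simp; linear_combination h1
        have e2 : (c + s) / (c - s) * s + c = 1 / (c - s) := by
          field_simp; linear_combination h1
        rw [e1, e2]
        exact mul_self_pos.mpr (one_div_ne_zero hne)
    · -- c * s = 0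
      rcases mul_eq_zero.mp hcs with h | h
      · subst h
        have hs2 : s ^ 2 = 1 := by linarith [h1]
        refine ⟨-(1 / 2), by rw [abs_lt]; constructor <;> norm_num, by nlinarith⟩
      · subst h
        have hc2 : c ^ 2 = 1 := by linarith [h1]
        refine ⟨1 / 2, by rw [abs_lt]; constructor <;> norm_num, by nlinarith⟩
    · -- 0 < c * s
      rcases lt_trichotomy c 0 with hc0 | hc0 | hc0
      · have hs0 : s < 0 := by nlinarith
        obtain ⟨b, hb, hp⟩ := exists_b_pos (c := -c) (s := -s) (by linarith) (by linarith)
          (fun h => h2 (by linarith))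
        refine ⟨b, hb, ?_⟩
        rw [show (b * c - s) * (b * s + c) = (b * (-c) - (-s)) * (b * (-s) + (-c)) by ring]
        exact hp
      · exfalso; rw [hc0] at hcs; simp at hcs
      · have hs0 : 0 < s := by nlinarith
        exact exists_b_pos hc0 hs0 h2

lemma red_pos_aux {c s L : ℝ} (h1 : c ^ 2 + s ^ 2 = 1) (hL : 1 < L) {b : ℝ} (hb : |b| < 1)
    (hA : b * c - s < 0) (hB : b * s + c < 0) :
    ∃ x y : ℝ, |c * x + s * y| < 1 / 2 ∧ 1 / 2 < |(-s) * x + c * y| ∧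
      |(-s) * x + c * y| < L / 2 ∧ x < 0 ∧ y < 0 := by
  have hs1 : s ≤ 1 := by nlinarith [sq_nonneg c]
  have hs1' : -1 ≤ s := by nlinarith [sq_nonneg c]
  have hc1 : c ≤ 1 := by nlinarith [sq_nonneg s]
  have hc1' : -1 ≤ c := by nlinarith [sq_nonneg s]
  set δ := min (min (s - b * c) (-(b * s + c)) / 4) ((L - 1) / 4) with hδdef
  have hδpos : 0 < δ :=
    lt_min (div_pos (lt_min (by linarith) (by linarith)) (by norm_num)) (by linarith)
  have hδ1 : δ ≤ (s - b * c) / 4 :=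
    le_trans (min_le_left _ _) (by linarith [min_le_left (s - b * c) (-(b * s + c))])
  have hδ2 : δ ≤ (-(b * s + c)) / 4 :=
    le_trans (min_le_left _ _) (by linarith [min_le_right (s - b * c) (-(b * s + c))])
  have hδ3 : δ ≤ (L - 1) / 4 := min_le_right _ _
  refine ⟨(b * c - s) / 2 - δ * s, (b * s + c) / 2 + δ * c, ?_, ?_, ?_, ?_, ?_⟩
  · have e : c * ((b * c - s) / 2 - δ * s) + s * ((b * s + c) / 2 + δ * c) = b / 2 := by
      linear_combination (b / 2) * h1
    rw [e, abs_div, abs_two]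
    linarith
  · have e : (-s) * ((b * c - s) / 2 - δ * s) + c * ((b * s + c) / 2 + δ * c) = 1 / 2 + δ := by
      linear_combination (1 / 2 + δ) * h1
    rw [e, abs_of_pos (by linarith)]
    linarith
  · have e : (-s) * ((b * c - s) / 2 - δ * s) + c * ((b * s + c) / 2 + δ * c) = 1 / 2 + δ := by
      linear_combination (1 / 2 + δ) * h1
    rw [e, abs_of_pos (by linarith)]
    linarith
  · nlinarith [mul_le_mul_of_nonneg_left hs1' hδpos.le]
  · nlinarith [mul_le_mul_of_nonneg_left hc1 hδpos.le]

lemma red_pos {c s L : ℝ} (h1 : c ^ 2 + s ^ 2 = 1) (hL : 1 < L) {b : ℝ} (hb : |b| < 1)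
    (hprod : 0 < (b * c - s) * (b * s + c)) :
    ∃ x y : ℝ, |c * x + s * y| < 1 / 2 ∧ 1 / 2 < |(-s) * x + c * y| ∧
      |(-s) * x + c * y| < L / 2 ∧ x < 0 ∧ y < 0 := by
  rcases mul_pos_iff.mp hprod with ⟨hA, hB⟩ | ⟨hA, hB⟩
  · obtain ⟨x, y, g1, g2, g3, g4, g5⟩ :=
      red_pos_aux (c := -c) (s := -s) (by linear_combination h1) hL hb
        (by linarith) (by linarith)
    have e1 : |(-c) * x + (-s) * y| = |c * x + s * y| := by
      rw [← abs_neg]; congr 1; ring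
    have e2 : |(-(-s)) * x + (-c) * y| = |(-s) * x + c * y| := by
      rw [← abs_neg]; congr 1; ring
    exact ⟨x, y, by rwa [e1] at g1, by rwa [e2] at g2, by rwa [e2] at g3, g4, g5⟩
  · exact red_pos_aux h1 hL hb hA hB

/-- Decompose the footprint of a centered `1 × L` rectangle (`L > 1`) over a quarter-plane
corner into the blue part (intersection of the inscribed central unit square with the
quarter-plane) and the red part (the remainder).  The blue part always has area `1/4`,
independent of the orientation `θ`, and the red part has measure zero if and only if the
rectangle is in a symmetric 45-degree position. -/
theorem blue_red_decomposition (L : ℝ) (hL : 1 < L) (θ : ℝ) :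
    volume (rect (0, 0) θ 1 ∩ Q) = 1 / 4 ∧
      (volume ((rect (0, 0) θ L ∩ Q) \ (rect (0, 0) θ 1 ∩ Q)) = 0 ↔
        ∃ k : ℤ, θ = π / 4 + k * π) := by
  refine ⟨square_quarter θ, ?_, ?_⟩
  · -- red part null → 45 degrees
    intro h0
    by_contra hk
    have hcs : Real.cos θ ≠ Real.sin θ := by
      intro h
      apply hk
      have hz : Real.sin (θ - π / 4) = 0 := by
        rw [Real.sin_sub, Real.sin_pi_div_four, Real.cos_pi_div_four, h]; ring
      obtain ⟨n, hn⟩ := Real.sin_eq_zero_iff.mp hz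
      exact ⟨n, by linarith⟩
    obtain ⟨b, hb, hprod⟩ := exists_b (Real.cos_sq_add_sin_sq θ) hcs
    obtain ⟨x, y, g1, g2, g3, g4, g5⟩ := red_pos (Real.cos_sq_add_sin_sq θ) hL hb hprod
    set c := Real.cos θ with hcdef
    set s := Real.sin θ with hsdef
    set U : Set (ℝ × ℝ) :=
      {p | |c * p.1 + s * p.2| < 1 / 2 ∧ 1 / 2 < |(-s) * p.1 + c * p.2| ∧
        |(-s) * p.1 + c * p.2| < L / 2 ∧ p.1 < 0 ∧ p.2 < 0} with hUdef
    have hUopen : IsOpen U := by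
      have hrfl : U = {p : ℝ × ℝ | |c * p.1 + s * p.2| < 1 / 2} ∩
          ({p : ℝ × ℝ | 1 / 2 < |(-s) * p.1 + c * p.2|} ∩
            ({p : ℝ × ℝ | |(-s) * p.1 + c * p.2| < L / 2} ∩
              ({p : ℝ × ℝ | p.1 < 0} ∩ {p : ℝ × ℝ | p.2 < 0}))) := rfl
      rw [hrfl]
      have hcont1 : Continuous fun p : ℝ × ℝ => |c * p.1 + s * p.2| :=
        Continuous.abs (by fun_prop)
      have hcont2 : Continuous fun p : ℝ × ℝ => |(-s) * p.1 + c * p.2| :=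
        Continuous.abs (by fun_prop)
      exact (isOpen_lt hcont1 continuous_const).inter
        ((isOpen_lt continuous_const hcont2).inter
          ((isOpen_lt hcont2 continuous_const).inter
            ((isOpen_lt continuous_fst continuous_const).inter
              (isOpen_lt continuous_snd continuous_const))))
    have hmem : ((x, y) : ℝ × ℝ) ∈ U := ⟨g1, g2, g3, g4, g5⟩
    have hUpos : 0 < volume U := hUopen.measure_pos volume ⟨(x, y), hmem⟩
    have hUsub : U ⊆ (rect (0, 0) θ L ∩ Q) \ (rect (0, 0) θ 1 ∩ Q) := by
      rintro p ⟨u1, u2, u3, u4, u5⟩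
      refine ⟨⟨mem_rect.mpr ⟨u1.le, u3.le⟩, ⟨u4.le, u5.le⟩⟩, ?_⟩
      rintro ⟨hr, _⟩
      have := (mem_rect.mp hr).2
      rw [show (1 : ℝ) / 2 = 1 / 2 by norm_num] at this
      linarith [u2]
    have hle := measure_mono (μ := volume) hUsub
    rw [h0] at hle
    exact absurd (lt_of_lt_of_le hUpos hle) (lt_irrefl 0)
  · -- 45 degrees → red part is empty
    rintro ⟨k, rfl⟩
    have hcs : Real.cos (π / 4 + k * π) = Real.sin (π / 4 + k * π) := by
      rw [Real.cos_add, Real.sin_add, Real.sin_int_mul_pi, Real.sin_pi_div_four,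
        Real.cos_pi_div_four]
      ring
    have hpyth := Real.cos_sq_add_sin_sq (π / 4 + k * π)
    have hc2 : Real.cos (π / 4 + k * π) ^ 2 = 1 / 2 := by
      rw [← hcs] at hpyth; linarith
    have hempty : (rect (0, 0) (π / 4 + k * π) L ∩ Q) \
        (rect (0, 0) (π / 4 + k * π) 1 ∩ Q) = ∅ := by
      rw [Set.eq_empty_iff_forall_notMem]
      rintro p ⟨⟨hrL, hQ⟩, hnot⟩
      obtain ⟨hu, hv⟩ := mem_rect.mp hrL
      have hv1 : ¬ |(-Real.sin (π / 4 + k * π)) * p.1 + Real.cos (π / 4 + k * π) * p.2| ≤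
          1 / 2 := by
        intro hle
        exact hnot ⟨mem_rect.mpr ⟨hu, by rw [show ((1:ℝ)/2) = 1/2 by norm_num]; exact hle⟩, hQ⟩
      push_neg at hv1
      obtain ⟨hx, hy⟩ := hQ
      rw [← hcs] at hu hv1
      rw [abs_le] at hu
      have hxy : 0 ≤ p.1 * p.2 := by
        nlinarith [mul_nonneg (neg_nonneg.mpr hx) (neg_nonneg.mpr hy)]
      rcases le_or_gt 0 ((-Real.cos (π / 4 + k * π)) * p.1 + Real.cos (π / 4 + k * π) * p.2)
        with hnn | hneg
      · rw [abs_of_nonneg hnn] at hv1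
        nlinarith [hu.1, hu.2, hv1, hc2, hxy]
      · rw [abs_of_neg hneg] at hv1
        nlinarith [hu.1, hu.2, hv1, hc2, hxy]
    rw [hempty]
    simp
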